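/- Let U, H be Hopf algebras and R : H ⊗ U → U ⊗ H a normal, multiplicative coalgebra map. Then for all u ∈ U, h ∈ H the identity S_U(u^R)^r ⊗ S_H(h^R)^r = S_U(u) ⊗ S_H(h) holds in U ⊗ H (i.e. R ∘ (S_H ⊗ S_U) ∘ τ ∘ R = (S_U ⊗ S_H) ∘ τ as maps H ⊗ U → U ⊗ H, where τ denotes the tensor flip). -/

import Mathlib

open TensorProduct

noncomputable section
set_option synthInstance.maxHeartbeats 1000000
set_option maxHeartbeats 4000000

variable {k : Type*} [Field k]
variable {U : Type*} [Ring U] [HopfAlgebra k U]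
variable {H : Type*} [Ring H] [HopfAlgebra k H]

/-- The tensor product comultiplication on `A ⊗ B`:
`a ⊗ b ↦ (a₍₁₎ ⊗ b₍₁₎) ⊗ (a₍₂₎ ⊗ b₍₂₎)`. -/
def comulTP (k A B : Type*) [Field k] [Ring A] [HopfAlgebra k A] [Ring B] [HopfAlgebra k B] :
    A ⊗[k] B →ₗ[k] (A ⊗[k] B) ⊗[k] (A ⊗[k] B) :=
  (TensorProduct.tensorTensorTensorComm k A A B B).toLinearMap ∘ₗ
    TensorProduct.map (Coalgebra.comul (R := k)) (Coalgebra.comul (R := k))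

/-- The tensor product counit on `A ⊗ B`: `a ⊗ b ↦ ε(a)ε(b)`. -/
def counitTP (k A B : Type*) [Field k] [Ring A] [HopfAlgebra k A] [Ring B] [HopfAlgebra k B] :
    A ⊗[k] B →ₗ[k] k :=
  (TensorProduct.lid k k).toLinearMap ∘ₗ
    TensorProduct.map (Coalgebra.counit (R := k)) (Coalgebra.counit (R := k))

/-- `R` is left normal: `R(h ⊗ 1_U) = 1_U ⊗ h`. -/
def LeftNormal (R : H ⊗[k] U →ₗ[k] U ⊗[k] H) : Prop :=
  ∀ h : H, R (h ⊗ₜ[k] (1 : U)) = (1 : U) ⊗ₜ[k] h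

/-- `R` is right normal: `R(1_H ⊗ u) = u ⊗ 1_H`. -/
def RightNormal (R : H ⊗[k] U →ₗ[k] U ⊗[k] H) : Prop :=
  ∀ u : U, R ((1 : H) ⊗ₜ[k] u) = u ⊗ₜ[k] (1 : H)

/-- `R` is left multiplicative: `u^R ⊗ (hh')^R = (u^R)^r ⊗ h^r(h')^R`,
as an equality of linear maps `(H ⊗ H) ⊗ U → U ⊗ H`. -/
def LeftMult (R : H ⊗[k] U →ₗ[k] U ⊗[k] H) : Prop :=
  R ∘ₗ TensorProduct.map (LinearMap.mul' k H) (LinearMap.id : U →ₗ[k] U) =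
    TensorProduct.map (LinearMap.id : U →ₗ[k] U) (LinearMap.mul' k H) ∘ₗ
      (TensorProduct.assoc k U H H).toLinearMap ∘ₗ
      TensorProduct.map R (LinearMap.id : H →ₗ[k] H) ∘ₗ
      (TensorProduct.assoc k H U H).symm.toLinearMap ∘ₗ
      TensorProduct.map (LinearMap.id : H →ₗ[k] H) R ∘ₗ
      (TensorProduct.assoc k H H U).toLinearMap

/-- `R` is right multiplicative: `(uu')^R ⊗ h^R = u^R(u')^r ⊗ (h^R)^r`,
as an equality of linear maps `H ⊗ (U ⊗ U) → U ⊗ H`. -/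
def RightMult (R : H ⊗[k] U →ₗ[k] U ⊗[k] H) : Prop :=
  R ∘ₗ TensorProduct.map (LinearMap.id : H →ₗ[k] H) (LinearMap.mul' k U) =
    TensorProduct.map (LinearMap.mul' k U) (LinearMap.id : H →ₗ[k] H) ∘ₗ
      (TensorProduct.assoc k U U H).symm.toLinearMap ∘ₗ
      TensorProduct.map (LinearMap.id : U →ₗ[k] U) R ∘ₗ
      (TensorProduct.assoc k U H U).toLinearMap ∘ₗ
      TensorProduct.map R (LinearMap.id : U →ₗ[k] U) ∘ₗ
      (TensorProduct.assoc k H U U).symm.toLinearMap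

/-- `R` is a coalgebra map for the tensor product coalgebra structures. -/
def IsCoalgMap (R : H ⊗[k] U →ₗ[k] U ⊗[k] H) : Prop :=
  counitTP k U H ∘ₗ R = counitTP k H U ∧
    comulTP k U H ∘ₗ R = TensorProduct.map R R ∘ₗ comulTP k H U

/-- The left action `h ⊗ u ↦ h ▷ u = ε_H(h^R)u^R`, as a linear map `H ⊗ U → U`. -/
def lact (R : H ⊗[k] U →ₗ[k] U ⊗[k] H) : H ⊗[k] U →ₗ[k] U :=
  (TensorProduct.rid k U).toLinearMap ∘ₗ
    TensorProduct.map (LinearMap.id : U →ₗ[k] U) (Coalgebra.counit (R := k)) ∘ₗ R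

/-- The right action `h ⊗ u ↦ h ◁ u = ε_U(u^R)h^R`, as a linear map `H ⊗ U → H`. -/
def ract (R : H ⊗[k] U →ₗ[k] U ⊗[k] H) : H ⊗[k] U →ₗ[k] H :=
  (TensorProduct.lid k H).toLinearMap ∘ₗ
    TensorProduct.map (Coalgebra.counit (R := k)) (LinearMap.id : H →ₗ[k] H) ∘ₗ R

section AuxTwisted

set_option synthInstance.maxHeartbeats 1000000
set_option maxHeartbeats 4000000

def mD (R : H ⊗[k] U →ₗ[k] U ⊗[k] H) :
    (U ⊗[k] H) ⊗[k] (U ⊗[k] H) →ₗ[k] U ⊗[k] H :=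
  TensorProduct.map (LinearMap.mul' k U) (LinearMap.mul' k H) ∘ₗ
    (TensorProduct.assoc k U U (H ⊗[k] H)).symm.toLinearMap ∘ₗ
    LinearMap.lTensor U ((TensorProduct.assoc k U H H).toLinearMap ∘ₗ
      R.rTensor H ∘ₗ (TensorProduct.assoc k H U H).symm.toLinearMap) ∘ₗ
    (TensorProduct.assoc k U H (U ⊗[k] H)).toLinearMap

lemma mD_pure (R : H ⊗[k] U →ₗ[k] U ⊗[k] H) (u : U) (h : H) (u' : U) (h' : H) :
    mD R ((u ⊗ₜ[k] h) ⊗ₜ[k] (u' ⊗ₜ[k] h')) =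
      TensorProduct.map (LinearMap.mulLeft k u) (LinearMap.mulRight k h') (R (h ⊗ₜ[k] u')) := by
  simp only [mD, LinearMap.coe_comp, Function.comp_apply, LinearEquiv.coe_coe,
    TensorProduct.assoc_tmul, LinearMap.lTensor_tmul, TensorProduct.assoc_symm_tmul,
    LinearMap.rTensor_tmul]
  generalize R (h ⊗ₜ[k] u') = x
  induction x using TensorProduct.induction_on with
  | zero => simp
  | tmul a b => simp
  | add x y hx hy => simp only [map_add, add_tmul, tmul_add, hx, hy]

variable {R : H ⊗[k] U →ₗ[k] U ⊗[k] H}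

lemma mD_one_left (hrn : ∀ u : U, R ((1 : H) ⊗ₜ[k] u) = u ⊗ₜ[k] (1 : H))
    (w : U ⊗[k] H) : mD R (((1 : U) ⊗ₜ[k] (1 : H)) ⊗ₜ[k] w) = w := by
  induction w using TensorProduct.induction_on with
  | zero => simp
  | tmul b y => rw [mD_pure, hrn]; simp
  | add x y hx hy => simp only [tmul_add, map_add, hx, hy]

lemma mD_one_right (hln : ∀ h : H, R (h ⊗ₜ[k] (1 : U)) = (1 : U) ⊗ₜ[k] h)
    (w : U ⊗[k] H) : mD R (w ⊗ₜ[k] ((1 : U) ⊗ₜ[k] (1 : H))) = w := by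
  induction w using TensorProduct.induction_on with
  | zero => simp
  | tmul b y => rw [mD_pure, hln]; simp
  | add x y hx hy => simp only [add_tmul, map_add, hx, hy]

/-- Key lemma from right multiplicativity:
`R(g⊗v) ·_D (b⊗y) = (id ⊗ (·y)) R(g ⊗ vb)`. -/
lemma mD_R_pure (hrm : RightMult R) (g : H) (v b : U) (y : H) :
    mD R (R (g ⊗ₜ[k] v) ⊗ₜ[k] (b ⊗ₜ[k] y)) =
      TensorProduct.map LinearMap.id (LinearMap.mulRight k y) (R (g ⊗ₜ[k] (v * b))) := by
  have hh := LinearMap.congr_fun hrm (g ⊗ₜ[k] (v ⊗ₜ[k] b))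
  simp only [LinearMap.coe_comp, Function.comp_apply, TensorProduct.map_tmul,
    LinearMap.id_coe, id_eq, LinearMap.mul'_apply, LinearEquiv.coe_coe,
    TensorProduct.assoc_symm_tmul] at hh
  rw [hh]
  generalize R (g ⊗ₜ[k] v) = x
  induction x using TensorProduct.induction_on with
  | zero => simp
  | tmul v' g' =>
      rw [mD_pure]
      simp only [TensorProduct.assoc_tmul, LinearMap.lTensor_tmul, TensorProduct.map_tmul,
        LinearMap.id_coe, id_eq]
      generalize R (g' ⊗ₜ[k] b) = z
      induction z using TensorProduct.induction_on with
      | zero => simp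
      | tmul c d => simp
      | add z₁ z₂ h₁ h₂ => simp only [map_add, tmul_add, h₁, h₂]
  | add x y hx hy => simp only [map_add, add_tmul, hx, hy]

/-- Key lemma from left multiplicativity:
`(v⊗g) ·_D R(h'⊗u'') = (v·) ⊗ id) R((g h')⊗u'')`. -/
lemma mD_pure_R (hlm : LeftMult R) (v : U) (g h' : H) (u'' : U) :
    mD R ((v ⊗ₜ[k] g) ⊗ₜ[k] R (h' ⊗ₜ[k] u'')) =
      TensorProduct.map (LinearMap.mulLeft k v) LinearMap.id (R ((g * h') ⊗ₜ[k] u'')) := by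
  have hh := LinearMap.congr_fun hlm ((g ⊗ₜ[k] h') ⊗ₜ[k] u'')
  simp only [LinearMap.coe_comp, Function.comp_apply, TensorProduct.map_tmul,
    LinearMap.id_coe, id_eq, LinearMap.mul'_apply, LinearEquiv.coe_coe,
    TensorProduct.assoc_tmul, LinearMap.lTensor_tmul] at hh
  rw [hh]
  generalize R (h' ⊗ₜ[k] u'') = y
  induction y using TensorProduct.induction_on with
  | zero => simp
  | tmul w p =>
      rw [mD_pure]
      simp only [TensorProduct.assoc_symm_tmul, TensorProduct.map_tmul,
        LinearMap.id_coe, id_eq]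
      generalize R (g ⊗ₜ[k] w) = z
      induction z using TensorProduct.induction_on with
      | zero => simp
      | tmul c d => simp
      | add z₁ z₂ h₁ h₂ => simp only [map_add, add_tmul, h₁, h₂]
  | add y₁ y₂ h₁ h₂ => simp only [map_add, tmul_add, h₁, h₂]

lemma mD_left_mul (hlm : LeftMult R) (u : U) (h' : H) (x : U ⊗[k] H) (u'' : U) (h'' : H) :
    mD R ((TensorProduct.map (LinearMap.mulLeft k u) (LinearMap.mulRight k h') x)
        ⊗ₜ[k] (u'' ⊗ₜ[k] h'')) =
      TensorProduct.map (LinearMap.mulLeft k u) (LinearMap.mulRight k h'')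
        (mD R (x ⊗ₜ[k] R (h' ⊗ₜ[k] u''))) := by
  induction x using TensorProduct.induction_on with
  | zero => simp
  | tmul v g =>
      simp only [TensorProduct.map_tmul, LinearMap.mulLeft_apply, LinearMap.mulRight_apply]
      rw [mD_pure, mD_pure_R hlm]
      generalize R ((g * h') ⊗ₜ[k] u'') = w
      induction w using TensorProduct.induction_on with
      | zero => simp
      | tmul c d => simp [mul_assoc]
      | add w₁ w₂ h₁ h₂ => simp only [map_add, h₁, h₂]
  | add x₁ x₂ h₁ h₂ => simp only [map_add, add_tmul, h₁, h₂]

lemma mD_right_mul (hrm : RightMult R) (u : U) (h : H) (u' : U) (y : U ⊗[k] H) (h'' : H) :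
    mD R ((u ⊗ₜ[k] h) ⊗ₜ[k]
        (TensorProduct.map (LinearMap.mulLeft k u') (LinearMap.mulRight k h'') y)) =
      TensorProduct.map (LinearMap.mulLeft k u) (LinearMap.mulRight k h'')
        (mD R (R (h ⊗ₜ[k] u') ⊗ₜ[k] y)) := by
  induction y using TensorProduct.induction_on with
  | zero => simp
  | tmul w p =>
      simp only [TensorProduct.map_tmul, LinearMap.mulLeft_apply, LinearMap.mulRight_apply]
      rw [mD_pure, mD_R_pure hrm]
      generalize R (h ⊗ₜ[k] (u' * w)) = z
      induction z using TensorProduct.induction_on with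
      | zero => simp
      | tmul c d => simp [mul_assoc]
      | add z₁ z₂ h₁ h₂ => simp only [map_add, h₁, h₂]
  | add y₁ y₂ h₁ h₂ => simp only [map_add, tmul_add, h₁, h₂]

/-- Associativity of the twisted multiplication. -/
lemma mD_assoc (hlm : LeftMult R) (hrm : RightMult R) (x y z : U ⊗[k] H) :
    mD R (mD R (x ⊗ₜ[k] y) ⊗ₜ[k] z) = mD R (x ⊗ₜ[k] mD R (y ⊗ₜ[k] z)) := by
  induction x using TensorProduct.induction_on with
  | zero => simp
  | tmul u h =>
    induction y using TensorProduct.induction_on with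
    | zero => simp
    | tmul u' h' =>
      induction z using TensorProduct.induction_on with
      | zero => simp
      | tmul u'' h'' =>
          rw [mD_pure, mD_pure, mD_left_mul hlm, mD_right_mul hrm]
      | add z₁ z₂ h₁ h₂ => simp only [map_add, tmul_add, h₁, h₂]
    | add y₁ y₂ h₁ h₂ => simp only [map_add, tmul_add, add_tmul, h₁, h₂]
  | add x₁ x₂ h₁ h₂ => simp only [map_add, tmul_add, add_tmul, h₁, h₂]

open Coalgebra in
lemma comulTP_tmul {A B : Type*} [Ring A] [HopfAlgebra k A] [Ring B] [HopfAlgebra k B]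
    (a : A) (b : B) (ra : Coalgebra.Repr k a (A × A)) (rb : Coalgebra.Repr k b (B × B)) :
    comulTP k A B (a ⊗ₜ[k] b) =
      ∑ i ∈ ra.index, ∑ j ∈ rb.index,
        (ra.left i ⊗ₜ[k] rb.left j) ⊗ₜ[k] (ra.right i ⊗ₜ[k] rb.right j) := by
  simp only [comulTP, LinearMap.coe_comp, Function.comp_apply, LinearEquiv.coe_coe,
    TensorProduct.map_tmul]
  rw [← ra.eq, ← rb.eq]
  simp only [TensorProduct.sum_tmul, TensorProduct.tmul_sum, map_sum,
    TensorProduct.tensorTensorTensorComm_tmul]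
  rw [Finset.sum_comm]

lemma counitTP_tmul {A B : Type*} [Ring A] [HopfAlgebra k A] [Ring B] [HopfAlgebra k B]
    (a : A) (b : B) :
    counitTP k A B (a ⊗ₜ[k] b) =
      Coalgebra.counit (R := k) a * Coalgebra.counit (R := k) b := by
  simp [counitTP, smul_eq_mul]

lemma sum_counit_smul {A : Type*} [Ring A] [HopfAlgebra k A] {a : A} (r : Coalgebra.Repr k a (A × A)) :
    ∑ i ∈ r.index, Coalgebra.counit (R := k) (r.left i) • r.right i = a := by
  have h := Coalgebra.sum_counit_tmul_eq r
  apply_fun (TensorProduct.lid k A) at h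
  simp only [map_sum, TensorProduct.lid_tmul] at h
  simpa using h

lemma sum_smul_counit {A : Type*} [Ring A] [HopfAlgebra k A] {a : A} (r : Coalgebra.Repr k a (A × A)) :
    ∑ i ∈ r.index, Coalgebra.counit (R := k) (r.right i) • r.left i = a := by
  have h := Coalgebra.sum_tmul_counit_eq r
  apply_fun (TensorProduct.rid k A) at h
  simp only [map_sum, TensorProduct.rid_tmul] at h
  simpa using h

variable (R) in
/-- Convolution product w.r.t. the tensor coalgebra on `H ⊗ U` and twisted algebra on `U ⊗ H`. -/
def convD (f g : H ⊗[k] U →ₗ[k] U ⊗[k] H) : H ⊗[k] U →ₗ[k] U ⊗[k] H :=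
  mD R ∘ₗ TensorProduct.map f g ∘ₗ comulTP k H U

/-- The convolution unit. -/
def eD : H ⊗[k] U →ₗ[k] U ⊗[k] H :=
  (counitTP k H U).smulRight ((1 : U) ⊗ₜ[k] (1 : H))

lemma eD_tmul (h : H) (u : U) :
    (eD : H ⊗[k] U →ₗ[k] U ⊗[k] H) (h ⊗ₜ[k] u) =
      (Coalgebra.counit (R := k) h * Coalgebra.counit (R := k) u) •
        ((1 : U) ⊗ₜ[k] (1 : H)) := by
  simp [eD, counitTP_tmul]

lemma convD_tmul (f g : H ⊗[k] U →ₗ[k] U ⊗[k] H) (h : H) (u : U)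
    (rh : Coalgebra.Repr k h (H × H)) (ru : Coalgebra.Repr k u (U × U)) :
    convD R f g (h ⊗ₜ[k] u) =
      ∑ i ∈ rh.index, ∑ j ∈ ru.index,
        mD R (f (rh.left i ⊗ₜ[k] ru.left j) ⊗ₜ[k] g (rh.right i ⊗ₜ[k] ru.right j)) := by
  simp only [convD, LinearMap.coe_comp, Function.comp_apply]
  rw [comulTP_tmul h u rh ru]
  simp [map_sum]

lemma convD_eD_left (hrn : RightNormal R) (f : H ⊗[k] U →ₗ[k] U ⊗[k] H) :
    convD R eD f = f := by
  apply TensorProduct.ext'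
  intro h u
  rw [convD_tmul _ _ h u (Coalgebra.Repr.arbitrary k h) (Coalgebra.Repr.arbitrary k u)]
  set rh := Coalgebra.Repr.arbitrary k h
  set ru := Coalgebra.Repr.arbitrary k u
  have step : ∀ i ∈ rh.index, ∀ j ∈ ru.index,
      mD R (eD (rh.left i ⊗ₜ[k] ru.left j) ⊗ₜ[k] f (rh.right i ⊗ₜ[k] ru.right j)) =
        Coalgebra.counit (R := k) (rh.left i) •
          (Coalgebra.counit (R := k) (ru.left j) • f (rh.right i ⊗ₜ[k] ru.right j)) := by
    intro i _ j _
    rw [eD_tmul, ← smul_tmul', map_smul, mD_one_left hrn, mul_smul]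
  rw [Finset.sum_congr rfl fun i hi => Finset.sum_congr rfl fun j hj => step i hi j hj]
  have inner : ∀ i ∈ rh.index,
      ∑ j ∈ ru.index, Coalgebra.counit (R := k) (rh.left i) •
        (Coalgebra.counit (R := k) (ru.left j) • f (rh.right i ⊗ₜ[k] ru.right j)) =
      Coalgebra.counit (R := k) (rh.left i) • f (rh.right i ⊗ₜ[k] u) := by
    intro i _
    rw [← Finset.smul_sum]
    congr 1
    calc ∑ j ∈ ru.index,
        Coalgebra.counit (R := k) (ru.left j) • f (rh.right i ⊗ₜ[k] ru.right j)
        = ∑ j ∈ ru.index,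
            f (rh.right i ⊗ₜ[k] (Coalgebra.counit (R := k) (ru.left j) • ru.right j)) := by
          refine Finset.sum_congr rfl fun j _ => ?_
          rw [tmul_smul, map_smul]
      _ = f (rh.right i ⊗ₜ[k] ∑ j ∈ ru.index,
            Coalgebra.counit (R := k) (ru.left j) • ru.right j) := by
          rw [← map_sum, ← TensorProduct.tmul_sum]
      _ = f (rh.right i ⊗ₜ[k] u) := by rw [sum_counit_smul]
  rw [Finset.sum_congr rfl inner]
  calc ∑ i ∈ rh.index, Coalgebra.counit (R := k) (rh.left i) • f (rh.right i ⊗ₜ[k] u)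
      = ∑ i ∈ rh.index, f ((Coalgebra.counit (R := k) (rh.left i) • rh.right i) ⊗ₜ[k] u) := by
        refine Finset.sum_congr rfl fun i _ => ?_
        rw [← smul_tmul', map_smul]
    _ = f ((∑ i ∈ rh.index, Coalgebra.counit (R := k) (rh.left i) • rh.right i) ⊗ₜ[k] u) := by
        rw [← map_sum, ← TensorProduct.sum_tmul]
    _ = f (h ⊗ₜ[k] u) := by rw [sum_counit_smul]

lemma convD_eD_right (hln : LeftNormal R) (f : H ⊗[k] U →ₗ[k] U ⊗[k] H) :
    convD R f eD = f := by
  apply TensorProduct.ext'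
  intro h u
  rw [convD_tmul _ _ h u (Coalgebra.Repr.arbitrary k h) (Coalgebra.Repr.arbitrary k u)]
  set rh := Coalgebra.Repr.arbitrary k h
  set ru := Coalgebra.Repr.arbitrary k u
  have step : ∀ i ∈ rh.index, ∀ j ∈ ru.index,
      mD R (f (rh.left i ⊗ₜ[k] ru.left j) ⊗ₜ[k] eD (rh.right i ⊗ₜ[k] ru.right j)) =
        Coalgebra.counit (R := k) (rh.right i) •
          (Coalgebra.counit (R := k) (ru.right j) • f (rh.left i ⊗ₜ[k] ru.left j)) := by
    intro i _ j _
    rw [eD_tmul, tmul_smul, map_smul, mD_one_right hln, mul_smul]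
  rw [Finset.sum_congr rfl fun i hi => Finset.sum_congr rfl fun j hj => step i hi j hj]
  have inner : ∀ i ∈ rh.index,
      ∑ j ∈ ru.index, Coalgebra.counit (R := k) (rh.right i) •
        (Coalgebra.counit (R := k) (ru.right j) • f (rh.left i ⊗ₜ[k] ru.left j)) =
      Coalgebra.counit (R := k) (rh.right i) • f (rh.left i ⊗ₜ[k] u) := by
    intro i _
    rw [← Finset.smul_sum]
    congr 1
    calc ∑ j ∈ ru.index,
        Coalgebra.counit (R := k) (ru.right j) • f (rh.left i ⊗ₜ[k] ru.left j)
        = ∑ j ∈ ru.index,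
            f (rh.left i ⊗ₜ[k] (Coalgebra.counit (R := k) (ru.right j) • ru.left j)) := by
          refine Finset.sum_congr rfl fun j _ => ?_
          rw [tmul_smul, map_smul]
      _ = f (rh.left i ⊗ₜ[k] ∑ j ∈ ru.index,
            Coalgebra.counit (R := k) (ru.right j) • ru.left j) := by
          rw [← map_sum, ← TensorProduct.tmul_sum]
      _ = f (rh.left i ⊗ₜ[k] u) := by rw [sum_smul_counit]
  rw [Finset.sum_congr rfl inner]
  calc ∑ i ∈ rh.index, Coalgebra.counit (R := k) (rh.right i) • f (rh.left i ⊗ₜ[k] u)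
      = ∑ i ∈ rh.index, f ((Coalgebra.counit (R := k) (rh.right i) • rh.left i) ⊗ₜ[k] u) := by
        refine Finset.sum_congr rfl fun i _ => ?_
        rw [← smul_tmul', map_smul]
    _ = f ((∑ i ∈ rh.index, Coalgebra.counit (R := k) (rh.right i) • rh.left i) ⊗ₜ[k] u) := by
        rw [← map_sum, ← TensorProduct.sum_tmul]
    _ = f (h ⊗ₜ[k] u) := by rw [sum_smul_counit]

open HopfAlgebra in
/-- `R * B = e` in twisted convolution, where `B = (S ⊗ S) ∘ τ`. -/
lemma convD_R_B (hln : LeftNormal R) (hrm : RightMult R) :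
    convD R R (TensorProduct.map (HopfAlgebra.antipode (R := k) (A := U))
      (HopfAlgebra.antipode (R := k) (A := H)) ∘ₗ (TensorProduct.comm k H U).toLinearMap) =
    eD := by
  apply TensorProduct.ext'
  intro h u
  rw [convD_tmul _ _ h u (Coalgebra.Repr.arbitrary k h) (Coalgebra.Repr.arbitrary k u),
    eD_tmul]
  set rh := Coalgebra.Repr.arbitrary k h
  set ru := Coalgebra.Repr.arbitrary k u
  have step : ∀ i ∈ rh.index, ∀ j ∈ ru.index,
      mD R (R (rh.left i ⊗ₜ[k] ru.left j) ⊗ₜ[k]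
        (TensorProduct.map (antipode (R := k)) (antipode (R := k)) ∘ₗ
          (TensorProduct.comm k H U).toLinearMap) (rh.right i ⊗ₜ[k] ru.right j)) =
      TensorProduct.map LinearMap.id (LinearMap.mulRight k (antipode (R := k) (rh.right i)))
        (R (rh.left i ⊗ₜ[k] (ru.left j * antipode (R := k) (ru.right j)))) := by
    intro i _ j _
    simp only [LinearMap.coe_comp, Function.comp_apply, LinearEquiv.coe_coe,
      TensorProduct.comm_tmul, TensorProduct.map_tmul]
    rw [mD_R_pure hrm]
  rw [Finset.sum_congr rfl fun i hi => Finset.sum_congr rfl fun j hj => step i hi j hj]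
  have inner : ∀ i ∈ rh.index,
      ∑ j ∈ ru.index,
        TensorProduct.map LinearMap.id (LinearMap.mulRight k (antipode (R := k) (rh.right i)))
          (R (rh.left i ⊗ₜ[k] (ru.left j * antipode (R := k) (ru.right j)))) =
      Coalgebra.counit (R := k) u •
        ((1 : U) ⊗ₜ[k] (rh.left i * antipode (R := k) (rh.right i))) := by
    intro i _
    rw [← map_sum, ← map_sum, ← TensorProduct.tmul_sum, sum_mul_antipode_eq_smul ru,
      tmul_smul, map_smul, map_smul, hln (rh.left i)]
    simp
  rw [Finset.sum_congr rfl inner, ← Finset.smul_sum, ← TensorProduct.tmul_sum,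
    sum_mul_antipode_eq_smul rh, tmul_smul, smul_smul, mul_comm]

open HopfAlgebra in
/-- The composite `S_D ∘ₗ (map Q id) ∘ₗ Δ_{U⊗H}` collapses to the counit, where
`Q = R ∘ (S ⊗ S) ∘ τ : U ⊗ H → U ⊗ H`. -/
lemma SD_conv_id (hln : LeftNormal R) (hrm : RightMult R) :
    mD R ∘ₗ TensorProduct.map
        (R ∘ₗ TensorProduct.map (HopfAlgebra.antipode (R := k) (A := H))
          (HopfAlgebra.antipode (R := k) (A := U)) ∘ₗ
            (TensorProduct.comm k U H).toLinearMap) LinearMap.id ∘ₗ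
      comulTP k U H =
    (counitTP k U H).smulRight ((1 : U) ⊗ₜ[k] (1 : H)) := by
  apply TensorProduct.ext'
  intro u h
  simp only [LinearMap.coe_comp, Function.comp_apply, LinearMap.smulRight_apply,
    counitTP_tmul]
  rw [comulTP_tmul u h (Coalgebra.Repr.arbitrary k u) (Coalgebra.Repr.arbitrary k h)]
  set ru := Coalgebra.Repr.arbitrary k u
  set rh := Coalgebra.Repr.arbitrary k h
  simp only [map_sum]
  have step : ∀ i ∈ ru.index, ∀ j ∈ rh.index,
      mD R (TensorProduct.map
        (R ∘ₗ TensorProduct.map (antipode (R := k)) (antipode (R := k)) ∘ₗ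
          (TensorProduct.comm k U H).toLinearMap) LinearMap.id
          ((ru.left i ⊗ₜ[k] rh.left j) ⊗ₜ[k] (ru.right i ⊗ₜ[k] rh.right j))) =
      TensorProduct.map LinearMap.id (LinearMap.mulRight k (rh.right j))
        (R (antipode (R := k) (rh.left j) ⊗ₜ[k]
          (antipode (R := k) (ru.left i) * ru.right i))) := by
    intro i _ j _
    simp only [TensorProduct.map_tmul, LinearMap.coe_comp, Function.comp_apply,
      LinearEquiv.coe_coe, TensorProduct.comm_tmul, LinearMap.id_coe, id_eq]
    rw [mD_R_pure hrm]
  rw [Finset.sum_congr rfl fun i hi => Finset.sum_congr rfl fun j hj => step i hi j hj,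
    Finset.sum_comm]
  have inner : ∀ j ∈ rh.index,
      ∑ i ∈ ru.index,
        TensorProduct.map LinearMap.id (LinearMap.mulRight k (rh.right j))
          (R (antipode (R := k) (rh.left j) ⊗ₜ[k]
            (antipode (R := k) (ru.left i) * ru.right i))) =
      Coalgebra.counit (R := k) u •
        ((1 : U) ⊗ₜ[k] (antipode (R := k) (rh.left j) * rh.right j)) := by
    intro j _
    rw [← map_sum, ← map_sum, ← TensorProduct.tmul_sum, sum_antipode_mul_eq_smul ru,
      tmul_smul, map_smul, map_smul, hln (antipode (R := k) (rh.left j))]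
    simp
  rw [Finset.sum_congr rfl inner, ← Finset.smul_sum, ← TensorProduct.tmul_sum,
    sum_antipode_mul_eq_smul rh, tmul_smul, smul_smul]

lemma convD_assoc (hlm : LeftMult R) (hrm : RightMult R)
    (f g l : H ⊗[k] U →ₗ[k] U ⊗[k] H) :
    convD R f (convD R g l) = convD R (convD R f g) l := by
  apply TensorProduct.ext'
  intro h u
  set rh := Coalgebra.Repr.arbitrary k h with hrh
  set ru := Coalgebra.Repr.arbitrary k u with hru
  let rh1 : (i : rh.ι) → Coalgebra.Repr k (rh.left i) (H × H) :=
    fun i => Coalgebra.Repr.arbitrary k (rh.left i)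
  let rh2 : (i : rh.ι) → Coalgebra.Repr k (rh.right i) (H × H) :=
    fun i => Coalgebra.Repr.arbitrary k (rh.right i)
  let ru1 : (j : ru.ι) → Coalgebra.Repr k (ru.left j) (U × U) :=
    fun j => Coalgebra.Repr.arbitrary k (ru.left j)
  let ru2 : (j : ru.ι) → Coalgebra.Repr k (ru.right j) (U × U) :=
    fun j => Coalgebra.Repr.arbitrary k (ru.right j)
  -- the auxiliary 6-linear map
  set Ξ : (H ⊗[k] (H ⊗[k] H)) ⊗[k] (U ⊗[k] (U ⊗[k] U)) →ₗ[k] U ⊗[k] H :=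
    mD R ∘ₗ (mD R).rTensor (U ⊗[k] H) ∘ₗ
      TensorProduct.map (TensorProduct.map f g) l ∘ₗ
      (TensorProduct.assoc k (H ⊗[k] U) (H ⊗[k] U) (H ⊗[k] U)).symm.toLinearMap ∘ₗ
      LinearMap.lTensor (H ⊗[k] U) (TensorProduct.tensorTensorTensorComm k H H U U).toLinearMap ∘ₗ
      (TensorProduct.tensorTensorTensorComm k H (H ⊗[k] H) U (U ⊗[k] U)).toLinearMap with hΞ
  have Ξpure : ∀ (a b c : H) (x y z : U),
      Ξ ((a ⊗ₜ[k] (b ⊗ₜ[k] c)) ⊗ₜ[k] (x ⊗ₜ[k] (y ⊗ₜ[k] z))) =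
        mD R (mD R (f (a ⊗ₜ[k] x) ⊗ₜ[k] g (b ⊗ₜ[k] y)) ⊗ₜ[k] l (c ⊗ₜ[k] z)) := by
    intro a b c x y z
    simp [hΞ]
  -- left side
  have lhs_eq : convD R f (convD R g l) (h ⊗ₜ[k] u) =
      Ξ ((∑ i ∈ rh.index, ∑ p ∈ (rh2 i).index,
            rh.left i ⊗ₜ[k] ((rh2 i).left p ⊗ₜ[k] (rh2 i).right p)) ⊗ₜ[k]
         (∑ j ∈ ru.index, ∑ q ∈ (ru2 j).index,
            ru.left j ⊗ₜ[k] ((ru2 j).left q ⊗ₜ[k] (ru2 j).right q))) := by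
    rw [convD_tmul f _ h u rh ru]
    have e1 : ∀ i ∈ rh.index, ∀ j ∈ ru.index,
        mD R (f (rh.left i ⊗ₜ[k] ru.left j) ⊗ₜ[k]
          convD R g l (rh.right i ⊗ₜ[k] ru.right j)) =
        ∑ p ∈ (rh2 i).index, ∑ q ∈ (ru2 j).index,
          Ξ ((rh.left i ⊗ₜ[k] ((rh2 i).left p ⊗ₜ[k] (rh2 i).right p)) ⊗ₜ[k]
             (ru.left j ⊗ₜ[k] ((ru2 j).left q ⊗ₜ[k] (ru2 j).right q))) := by
      intro i _ j _
      rw [convD_tmul g l _ _ (rh2 i) (ru2 j)]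
      simp only [TensorProduct.tmul_sum, map_sum, Ξpure]
      exact Finset.sum_congr rfl fun p _ => Finset.sum_congr rfl fun q _ =>
        (mD_assoc hlm hrm _ _ _).symm
    rw [Finset.sum_congr rfl fun i hi => Finset.sum_congr rfl fun j hj => e1 i hi j hj,
      Finset.sum_comm,
      Finset.sum_congr rfl fun j _ => Finset.sum_congr rfl fun i _ => Finset.sum_comm,
      Finset.sum_congr rfl fun j _ => Finset.sum_comm]
    simp only [TensorProduct.sum_tmul, TensorProduct.tmul_sum, map_sum]
  -- right side
  have rhs_eq : convD R (convD R f g) l (h ⊗ₜ[k] u) =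
      Ξ ((∑ i ∈ rh.index, ∑ p ∈ (rh1 i).index,
            (rh1 i).left p ⊗ₜ[k] ((rh1 i).right p ⊗ₜ[k] rh.right i)) ⊗ₜ[k]
         (∑ j ∈ ru.index, ∑ q ∈ (ru1 j).index,
            (ru1 j).left q ⊗ₜ[k] ((ru1 j).right q ⊗ₜ[k] ru.right j))) := by
    rw [convD_tmul _ l h u rh ru]
    have e1 : ∀ i ∈ rh.index, ∀ j ∈ ru.index,
        mD R (convD R f g (rh.left i ⊗ₜ[k] ru.left j) ⊗ₜ[k]
          l (rh.right i ⊗ₜ[k] ru.right j)) =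
        ∑ p ∈ (rh1 i).index, ∑ q ∈ (ru1 j).index,
          Ξ (((rh1 i).left p ⊗ₜ[k] ((rh1 i).right p ⊗ₜ[k] rh.right i)) ⊗ₜ[k]
             ((ru1 j).left q ⊗ₜ[k] ((ru1 j).right q ⊗ₜ[k] ru.right j))) := by
      intro i _ j _
      rw [convD_tmul f g _ _ (rh1 i) (ru1 j)]
      simp only [TensorProduct.sum_tmul, map_sum, Ξpure]
    rw [Finset.sum_congr rfl fun i hi => Finset.sum_congr rfl fun j hj => e1 i hi j hj,
      Finset.sum_comm,
      Finset.sum_congr rfl fun j _ => Finset.sum_congr rfl fun i _ => Finset.sum_comm,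
      Finset.sum_congr rfl fun j _ => Finset.sum_comm]
    simp only [TensorProduct.sum_tmul, TensorProduct.tmul_sum, map_sum]
  rw [lhs_eq, rhs_eq,
    Coalgebra.sum_tmul_tmul_eq rh rh1 rh2, Coalgebra.sum_tmul_tmul_eq ru ru1 ru2]

open HopfAlgebra in
lemma convD_M_R (hln : LeftNormal R) (hrm : RightMult R) (hcm : IsCoalgMap R) :
    convD R ((R ∘ₗ TensorProduct.map (HopfAlgebra.antipode (R := k) (A := H))
        (HopfAlgebra.antipode (R := k) (A := U)) ∘ₗ
        (TensorProduct.comm k U H).toLinearMap) ∘ₗ R) R = eD := by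
  apply TensorProduct.ext'
  intro h u
  have expand : convD R ((R ∘ₗ TensorProduct.map (HopfAlgebra.antipode (R := k) (A := H))
      (HopfAlgebra.antipode (R := k) (A := U)) ∘ₗ
      (TensorProduct.comm k U H).toLinearMap) ∘ₗ R) R (h ⊗ₜ[k] u) =
      mD R ((TensorProduct.map (R ∘ₗ TensorProduct.map (HopfAlgebra.antipode (R := k) (A := H))
        (HopfAlgebra.antipode (R := k) (A := U)) ∘ₗ
        (TensorProduct.comm k U H).toLinearMap) LinearMap.id)
          (comulTP k U H (R (h ⊗ₜ[k] u)))) := by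
    simp only [convD, LinearMap.coe_comp, Function.comp_apply]
    rw [show (TensorProduct.map ((R ∘ₗ TensorProduct.map (HopfAlgebra.antipode (R := k) (A := H))
        (HopfAlgebra.antipode (R := k) (A := U)) ∘ₗ
        (TensorProduct.comm k U H).toLinearMap) ∘ₗ R) R) =
      (TensorProduct.map (R ∘ₗ TensorProduct.map (HopfAlgebra.antipode (R := k) (A := H))
        (HopfAlgebra.antipode (R := k) (A := U)) ∘ₗ
        (TensorProduct.comm k U H).toLinearMap) LinearMap.id) ∘ₗ TensorProduct.map R R from by
      rw [← TensorProduct.map_comp, LinearMap.id_comp]]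
    simp only [LinearMap.coe_comp, Function.comp_apply]
    have h2 := LinearMap.congr_fun hcm.2 (h ⊗ₜ[k] u)
    simp only [LinearMap.coe_comp, Function.comp_apply] at h2
    rw [← h2]
  rw [expand]
  have hsd := LinearMap.congr_fun (SD_conv_id (R := R) hln hrm) (R (h ⊗ₜ[k] u))
  simp only [LinearMap.coe_comp, Function.comp_apply, LinearMap.smulRight_apply] at hsd
  have h1 := LinearMap.congr_fun hcm.1 (h ⊗ₜ[k] u)
  simp only [LinearMap.coe_comp, Function.comp_apply] at h1
  rw [hsd, h1, eD, LinearMap.smulRight_apply]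


end AuxTwisted

/-- STATEMENT 18: for a normal, multiplicative coalgebra map `R : H ⊗ U → U ⊗ H`,
`S_U(u^R)^r ⊗ S_H(h^R)^r = S_U(u) ⊗ S_H(h)`, i.e.
`R ∘ (S_H ⊗ S_U) ∘ τ ∘ R = (S_U ⊗ S_H) ∘ τ` as linear maps `H ⊗ U → U ⊗ H`. -/
theorem antipode_R_identity (R : H ⊗[k] U →ₗ[k] U ⊗[k] H)
    (hln : LeftNormal R) (hrn : RightNormal R)
    (hlm : LeftMult R) (hrm : RightMult R) (hcm : IsCoalgMap R) :
    R ∘ₗ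
      TensorProduct.map (HopfAlgebra.antipode (R := k) (A := H))
        (HopfAlgebra.antipode (R := k) (A := U)) ∘ₗ
      (TensorProduct.comm k U H).toLinearMap ∘ₗ R =
    TensorProduct.map (HopfAlgebra.antipode (R := k) (A := U))
        (HopfAlgebra.antipode (R := k) (A := H)) ∘ₗ
      (TensorProduct.comm k H U).toLinearMap := by
  set B := TensorProduct.map (HopfAlgebra.antipode (R := k) (A := U))
      (HopfAlgebra.antipode (R := k) (A := H)) ∘ₗ (TensorProduct.comm k H U).toLinearMap with hB
  set M := (R ∘ₗ TensorProduct.map (HopfAlgebra.antipode (R := k) (A := H))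
      (HopfAlgebra.antipode (R := k) (A := U)) ∘ₗ
      (TensorProduct.comm k U H).toLinearMap) ∘ₗ R with hM
  have key : M = B := by
    calc M = convD R M eD := (convD_eD_right hln M).symm
      _ = convD R M (convD R R B) := by rw [convD_R_B hln hrm]
      _ = convD R (convD R M R) B := convD_assoc hlm hrm M R B
      _ = convD R eD B := by rw [hM, convD_M_R hln hrm hcm]
      _ = B := convD_eD_left hrn B
  exact key
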